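/- Noiseless estimation bound: if Y = W*X with rank(W*) = r* and σ_min(X) > 0, then after L rounds of parallel rank-1 deflation with r components, ‖W* - Σ_{k=1}^r b_{k,L} a_{k,L}ᵀ‖_F ≤ (1/σ_min(X)) ( Σ_{k=r+1}^{r*} σ_k* + Σ_{k=1}^r G_{k,L} ), where σ_k* denotes the k-th singular value of Y = W*X. -/

import Mathlib

open Matrix

/-- Euclidean norm of a real vector. -/
noncomputable def euclNorm {n : ℕ} (x : Fin n → ℝ) : ℝ :=
  Real.sqrt (∑ i, x i ^ 2)

/-- Frobenius norm of a real matrix. -/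
noncomputable def frobNorm {m n : ℕ} (A : Matrix (Fin m) (Fin n) ℝ) : ℝ :=
  Real.sqrt (∑ i, ∑ j, A i j ^ 2)


lemma frobNorm_eq {m n : ℕ} (A : Matrix (Fin m) (Fin n) ℝ) :
    frobNorm A = ‖(WithLp.equiv 2 (Fin m × Fin n → ℝ)).symm (fun p => A p.1 p.2)‖ := by
  rw [EuclideanSpace.norm_eq]
  simp [frobNorm, Fintype.sum_prod_type, sq_abs]

lemma frobNorm_nonneg {m n : ℕ} (A : Matrix (Fin m) (Fin n) ℝ) : 0 ≤ frobNorm A :=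
  Real.sqrt_nonneg _

lemma frobNorm_neg {m n : ℕ} (A : Matrix (Fin m) (Fin n) ℝ) : frobNorm (-A) = frobNorm A := by
  simp [frobNorm]

lemma frobNorm_add_le {m n : ℕ} (A B : Matrix (Fin m) (Fin n) ℝ) :
    frobNorm (A + B) ≤ frobNorm A + frobNorm B := by
  rw [frobNorm_eq, frobNorm_eq, frobNorm_eq]
  rw [show (WithLp.equiv 2 (Fin m × Fin n → ℝ)).symm (fun p => (A + B) p.1 p.2)
      = (WithLp.equiv 2 (Fin m × Fin n → ℝ)).symm (fun p => A p.1 p.2)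
        + (WithLp.equiv 2 (Fin m × Fin n → ℝ)).symm (fun p => B p.1 p.2) from rfl]
  exact norm_add_le _ _

lemma frobNorm_sum_le {ι : Type*} {m n : ℕ} (s : Finset ι) (f : ι → Matrix (Fin m) (Fin n) ℝ) :
    frobNorm (∑ k ∈ s, f k) ≤ ∑ k ∈ s, frobNorm (f k) := by
  classical
  induction s using Finset.induction with
  | empty => simp [frobNorm]
  | insert _ _ h ih =>
    rw [Finset.sum_insert h, Finset.sum_insert h]
    exact le_trans (frobNorm_add_le _ _) (by linarith)

lemma frobNorm_smul {m n : ℕ} (c : ℝ) (A : Matrix (Fin m) (Fin n) ℝ) :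
    frobNorm (c • A) = |c| * frobNorm A := by
  rw [frobNorm_eq, frobNorm_eq]
  rw [show (WithLp.equiv 2 (Fin m × Fin n → ℝ)).symm (fun p => (c • A) p.1 p.2)
      = c • (WithLp.equiv 2 (Fin m × Fin n → ℝ)).symm (fun p => A p.1 p.2) from rfl]
  rw [norm_smul, Real.norm_eq_abs]

lemma frobNorm_vecMulVec {m n : ℕ} (x : Fin m → ℝ) (y : Fin n → ℝ) :
    frobNorm (Matrix.vecMulVec x y) = euclNorm x * euclNorm y := by
  unfold frobNorm euclNorm
  rw [← Real.sqrt_mul (by positivity)]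
  congr 1
  rw [Finset.sum_mul_sum]
  simp [Matrix.vecMulVec, mul_pow]

lemma euclNorm_one {m : ℕ} (x : Fin m → ℝ) (h : dotProduct x x = 1) : euclNorm x = 1 := by
  have : ∑ i, x i ^ 2 = 1 := by
    rw [← h]; simp [dotProduct, sq]
  simp [euclNorm, this]

lemma sigmamin_frob {m d n : ℕ} (σmin : ℝ) (hσ : 0 ≤ σmin)
    (X : Matrix (Fin d) (Fin n) ℝ) (A : Matrix (Fin m) (Fin d) ℝ)
    (h : ∀ w : Fin d → ℝ, σmin * euclNorm w ≤ euclNorm (Matrix.vecMul w X)) :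
    σmin * frobNorm A ≤ frobNorm (A * X) := by
  have key : σmin ^ 2 * (∑ i, ∑ j, A i j ^ 2) ≤ ∑ i, ∑ j, (A * X) i j ^ 2 := by
    rw [Finset.mul_sum]
    apply Finset.sum_le_sum
    intro i _
    have hi := h (A i)
    have h1 : 0 ≤ σmin * euclNorm (A i) := mul_nonneg hσ (Real.sqrt_nonneg _)
    have hsq := mul_self_le_mul_self h1 hi
    have e1 : euclNorm (A i) ^ 2 = ∑ j, A i j ^ 2 := by
      rw [euclNorm, Real.sq_sqrt (by positivity)]
    have e2 : euclNorm (Matrix.vecMul (A i) X) ^ 2 = ∑ j, (A * X) i j ^ 2 := by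
      rw [euclNorm, Real.sq_sqrt (by positivity)]
      simp [Matrix.mul_apply, Matrix.vecMul, dotProduct]
    calc σmin ^ 2 * ∑ j, A i j ^ 2 = (σmin * euclNorm (A i)) * (σmin * euclNorm (A i)) := by
          rw [← e1]; ring
      _ ≤ euclNorm (Matrix.vecMul (A i) X) * euclNorm (Matrix.vecMul (A i) X) := hsq
      _ = ∑ j, (A * X) i j ^ 2 := by rw [← e2]; ring
  calc σmin * frobNorm A = Real.sqrt (σmin ^ 2 * ∑ i, ∑ j, A i j ^ 2) := by
        rw [Real.sqrt_mul (by positivity), Real.sqrt_sq hσ, frobNorm]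
    _ ≤ Real.sqrt (∑ i, ∑ j, (A * X) i j ^ 2) := Real.sqrt_le_sqrt key
    _ = frobNorm (A * X) := rfl

/-- **Noiseless estimation bound.**
If `Y = W* X` with `rank(W*) = r*` (exhibited by an SVD `Y = Σ_{k=1}^{r*} σ_k* u_k* v_k*ᵀ`
with orthonormal families and positive singular values) and `σ_min(X) > 0` (i.e. `σmin > 0`
satisfies `σmin ‖w‖ ≤ ‖wᵀX‖` for every row vector `w`), then after `L` rounds of parallel
rank-1 deflation with `r` components,
`‖W* - Σ_{k=1}^r b_{k,L} a_{k,L}ᵀ‖_F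
   ≤ (1/σ_min(X)) (Σ_{k=r+1}^{r*} σ_k* + Σ_{k=1}^r G_{k,L})`,
where `G_{k,L} = ‖b_{k,L} a_{k,L}ᵀ X - b_k* a_k*ᵀ X‖_F` and the ideal component satisfies
`b_k* a_k*ᵀ X = σ_k* u_k* v_k*ᵀ`. -/
theorem noiseless_estimation_bound
    (m d n r rstar : ℕ) (hr : r ≤ rstar)
    (X : Matrix (Fin d) (Fin n) ℝ) (Wstar : Matrix (Fin m) (Fin d) ℝ)
    (σmin : ℝ) (σ : ℕ → ℝ) (u : ℕ → Fin m → ℝ) (v : ℕ → Fin n → ℝ)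
    (a : ℕ → Fin d → ℝ) (b : ℕ → Fin m → ℝ)          -- iterates (a_{k,L}, b_{k,L})
    (astar : ℕ → Fin d → ℝ) (bstar : ℕ → Fin m → ℝ)  -- ideal components
    -- smallest singular value of X is positive
    (hσmin0 : 0 < σmin)
    (hσminX : ∀ w : Fin d → ℝ, σmin * euclNorm w ≤ euclNorm (Matrix.vecMul w X))
    -- SVD of Y = W*X exhibiting rank(W*X) = r*
    (hSVD : Wstar * X = ∑ k ∈ Finset.Icc 1 rstar, σ k • Matrix.vecMulVec (u k) (v k))
    (hσpos : ∀ k ∈ Finset.Icc 1 rstar, 0 < σ k)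
    (hσdec : ∀ k ∈ Finset.Icc 1 rstar, ∀ k' ∈ Finset.Icc 1 rstar, k < k' → σ k' < σ k)
    (huon : ∀ j ∈ Finset.Icc 1 rstar, ∀ k ∈ Finset.Icc 1 rstar,
      dotProduct (u j) (u k) = if j = k then 1 else 0)
    (hvon : ∀ j ∈ Finset.Icc 1 rstar, ∀ k ∈ Finset.Icc 1 rstar,
      dotProduct (v j) (v k) = if j = k then 1 else 0)
    -- the ideal components are the leading singular components of Y
    (hstar : ∀ k ∈ Finset.Icc 1 r,
      Matrix.vecMulVec (bstar k) (astar k) * X = σ k • Matrix.vecMulVec (u k) (v k)) :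
    frobNorm (Wstar - ∑ k ∈ Finset.Icc 1 r, Matrix.vecMulVec (b k) (a k))
      ≤ (1 / σmin) * ((∑ k ∈ Finset.Icc (r + 1) rstar, σ k)
          + ∑ k ∈ Finset.Icc 1 r,
              frobNorm (Matrix.vecMulVec (b k) (a k) * X
                - Matrix.vecMulVec (bstar k) (astar k) * X)) := by
  classical
  set E := Wstar - ∑ k ∈ Finset.Icc 1 r, Matrix.vecMulVec (b k) (a k) with hE
  have hsplit : ∑ k ∈ Finset.Icc 1 rstar, σ k • Matrix.vecMulVec (u k) (v k)
      = (∑ k ∈ Finset.Icc 1 r, σ k • Matrix.vecMulVec (u k) (v k))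
        + ∑ k ∈ Finset.Icc (r+1) rstar, σ k • Matrix.vecMulVec (u k) (v k) := by
    have e1 : ∀ s : ℕ, Finset.Icc 1 s = Finset.Ioc 0 s := fun s => Finset.Icc_add_one_left_eq_Ioc 0 s
    have e2 : Finset.Icc (r+1) rstar = Finset.Ioc r rstar := Finset.Icc_add_one_left_eq_Ioc r rstar
    rw [e1, e1, e2]
    exact (Finset.sum_Ioc_consecutive _ (Nat.zero_le r) hr).symm
  have hEX : E * X = (∑ k ∈ Finset.Icc (r+1) rstar, σ k • Matrix.vecMulVec (u k) (v k))
      + ∑ k ∈ Finset.Icc 1 r,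
          (Matrix.vecMulVec (bstar k) (astar k) * X - Matrix.vecMulVec (b k) (a k) * X) := by
    rw [hE, Matrix.sub_mul, hSVD, hsplit, Matrix.sum_mul, Finset.sum_sub_distrib]
    rw [Finset.sum_congr rfl hstar]
    abel
  have hmem : ∀ k ∈ Finset.Icc (r+1) rstar, k ∈ Finset.Icc 1 rstar := by
    intro k hk
    rw [Finset.mem_Icc] at hk ⊢
    omega
  have hterm : ∀ k ∈ Finset.Icc (r+1) rstar,
      frobNorm (σ k • Matrix.vecMulVec (u k) (v k)) = σ k := by
    intro k hk
    have hk' := hmem k hk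
    rw [frobNorm_smul, frobNorm_vecMulVec,
      euclNorm_one _ (by simpa using huon k hk' k hk'),
      euclNorm_one _ (by simpa using hvon k hk' k hk'),
      abs_of_pos (hσpos k hk')]
    ring
  have h1 : σmin * frobNorm E ≤ frobNorm (E * X) :=
    sigmamin_frob σmin hσmin0.le X E hσminX
  have h2 : frobNorm (E * X) ≤ (∑ k ∈ Finset.Icc (r+1) rstar, σ k)
      + ∑ k ∈ Finset.Icc 1 r,
          frobNorm (Matrix.vecMulVec (b k) (a k) * X
            - Matrix.vecMulVec (bstar k) (astar k) * X) := by
    rw [hEX]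
    refine le_trans (frobNorm_add_le _ _) (add_le_add ?_ ?_)
    · exact le_trans (frobNorm_sum_le _ _) (le_of_eq (Finset.sum_congr rfl hterm))
    · refine le_trans (frobNorm_sum_le _ _) (le_of_eq (Finset.sum_congr rfl ?_))
      intro k _
      rw [show Matrix.vecMulVec (bstar k) (astar k) * X - Matrix.vecMulVec (b k) (a k) * X
        = -(Matrix.vecMulVec (b k) (a k) * X - Matrix.vecMulVec (bstar k) (astar k) * X) by abel,
        frobNorm_neg]
  rw [one_div, ← div_eq_inv_mul, le_div_iff₀ hσmin0]
  calc frobNorm E * σmin = σmin * frobNorm E := mul_comm _ _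
    _ ≤ _ := le_trans h1 h2
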